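/- Let η₀ > 0, λ > 0 and r with 1 < r < 2 be real numbers, and define g_r : ℝ² → ℝ² by g_r(z) = η₀ (1 + (λ/2)|z|²)^{(r−2)/2} z, where |·| is the Euclidean norm on ℝ². Then there exists a constant C̄_r > 0, depending only on η₀, λ and r, such that for all z, t ∈ ℝ²: ( g_r(z) − g_r(t) , z − t ) ≥ C̄_r |z − t|² / (1 + |t|^{2−r} + |z|^{2−r}), where (·,·) denotes the Euclidean inner product on ℝ². -/

import Mathlib

open scoped RealInnerProductSpace

set_option maxHeartbeats 1000000 in
private lemma carreau_core (η₀ lam r : ℝ) (hη₀ : 0 < η₀) (hlam : 0 < lam)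
    (hr1 : 1 < r) (hr2 : r < 2) (z t : EuclideanSpace ℝ (Fin 2)) :
    ⟪(η₀ * (1 + (lam / 2) * ‖z‖ ^ 2) ^ ((r - 2) / 2)) • z
        - (η₀ * (1 + (lam / 2) * ‖t‖ ^ 2) ^ ((r - 2) / 2)) • t, z - t⟫
      ≥ η₀ * (r - 1) * (1 + lam / 2 * (‖z‖ + ‖t‖) ^ 2) ^ ((r - 2) / 2) * ‖z - t‖ ^ 2 := by
  set p : ℝ := (r - 2) / 2 with hp
  have hpneg : p < 0 := by rw [hp]; linarith
  set v : EuclideanSpace ℝ (Fin 2) := z - t with hv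
  set w : ℝ → EuclideanSpace ℝ (Fin 2) := fun s => t + s • v with hw
  have hupos : ∀ s : ℝ, 0 < 1 + lam / 2 * ‖w s‖ ^ 2 := by
    intro s; positivity
  set f : ℝ → ℝ := fun s => η₀ * ((1 + lam / 2 * ‖w s‖ ^ 2) ^ p * ⟪w s, v⟫) with hf
  set f' : ℝ → ℝ := fun s =>
    η₀ * ((lam * ⟪w s, v⟫ * p * (1 + lam / 2 * ‖w s‖ ^ 2) ^ (p - 1)) * ⟪w s, v⟫
      + (1 + lam / 2 * ‖w s‖ ^ 2) ^ p * ‖v‖ ^ 2) with hf'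
  have hwderiv : ∀ s : ℝ, HasDerivAt w v s := by
    intro s
    exact (((hasDerivAt_id s).smul_const v).const_add t).congr_deriv (one_smul ℝ v)
  have hderiv : ∀ s : ℝ, HasDerivAt f (f' s) s := by
    intro s
    have h1 : HasDerivAt (fun s => ⟪w s, w s⟫) (2 * ⟪w s, v⟫) s := by
      have h := (hwderiv s).inner ℝ (hwderiv s)
      rw [real_inner_comm (w s) v, ← two_mul] at h
      exact h
    have h2 : HasDerivAt (fun s => 1 + lam / 2 * ‖w s‖ ^ 2) (lam * ⟪w s, v⟫) s := by
      have h : HasDerivAt (fun s => 1 + lam / 2 * ⟪w s, w s⟫) (lam / 2 * (2 * ⟪w s, v⟫)) s :=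
        (h1.const_mul (lam / 2)).const_add 1
      have he : (fun s => 1 + lam / 2 * ⟪w s, w s⟫) = fun s => 1 + lam / 2 * ‖w s‖ ^ 2 := by
        funext s; rw [real_inner_self_eq_norm_sq]
      rw [he] at h
      have heq : lam * ⟪w s, v⟫ = lam / 2 * (2 * ⟪w s, v⟫) := by ring
      rw [heq]
      exact h
    have h3 : HasDerivAt (fun s => (1 + lam / 2 * ‖w s‖ ^ 2) ^ p)
        ((lam * ⟪w s, v⟫) * p * (1 + lam / 2 * ‖w s‖ ^ 2) ^ (p - 1)) s :=
      h2.rpow_const (Or.inl (ne_of_gt (hupos s)))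
    have h4 : HasDerivAt (fun s => ⟪w s, v⟫) (‖v‖ ^ 2) s := by
      have h := (hwderiv s).inner ℝ (hasDerivAt_const s v)
      rw [inner_zero_right, zero_add, real_inner_self_eq_norm_sq] at h
      exact h
    exact ((h3.mul h4).const_mul η₀)
  -- lower bound for f' on [0,1]
  set U : ℝ := 1 + lam / 2 * (‖z‖ + ‖t‖) ^ 2 with hU
  have hUpos : 0 < U := by positivity
  have hηr : (0:ℝ) ≤ η₀ * (r - 1) := by nlinarith
  set c : ℝ := η₀ * (r - 1) * U ^ p with hc
  have hbound : ∀ s ∈ Set.Icc (0:ℝ) 1, c * ‖v‖ ^ 2 ≤ f' s := by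
    intro s hs
    set u : ℝ := 1 + lam / 2 * ‖w s‖ ^ 2 with hu
    have hu0 : 0 < u := hupos s
    have hwle : ‖w s‖ ≤ ‖z‖ + ‖t‖ := by
      have hws : w s = (1 - s) • t + s • z := by
        simp only [hw, hv]; module
      rw [hws]
      calc ‖(1 - s) • t + s • z‖ ≤ ‖(1 - s) • t‖ + ‖s • z‖ := norm_add_le _ _
        _ = (1 - s) * ‖t‖ + s * ‖z‖ := by
            rw [norm_smul, norm_smul, Real.norm_eq_abs, Real.norm_eq_abs,
              abs_of_nonneg (by linarith [hs.2]), abs_of_nonneg hs.1]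
        _ ≤ ‖z‖ + ‖t‖ := by
            nlinarith [norm_nonneg t, norm_nonneg z, hs.1, hs.2]
    have huU : u ≤ U := by
      rw [hu, hU]
      have h := mul_self_le_mul_self (norm_nonneg (w s)) hwle
      nlinarith
    have hUu : U ^ p ≤ u ^ p := Real.rpow_le_rpow_of_nonpos hu0 huU hpneg.le
    have hcs : ⟪w s, v⟫ * ⟪w s, v⟫ ≤ ‖w s‖ ^ 2 * ‖v‖ ^ 2 := by
      have h := real_inner_mul_inner_self_le (w s) v
      rwa [real_inner_self_eq_norm_sq, real_inner_self_eq_norm_sq] at h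
    have hup1 : (0:ℝ) < u ^ (p - 1) := Real.rpow_pos_of_pos hu0 _
    have key : η₀ * (r - 1) * u ^ p * ‖v‖ ^ 2 ≤ f' s := by
      have hneg : lam * p * u ^ (p - 1) ≤ 0 := by
        have heq : lam * p * u ^ (p - 1) = (lam * u ^ (p - 1)) * p := by ring
        rw [heq]
        exact mul_nonpos_of_nonneg_of_nonpos (mul_nonneg hlam.le hup1.le) hpneg.le
      have h5 : lam * p * u ^ (p - 1) * (‖w s‖ ^ 2 * ‖v‖ ^ 2)
          ≤ lam * p * u ^ (p - 1) * (⟪w s, v⟫ * ⟪w s, v⟫) :=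
        mul_le_mul_of_nonpos_left hcs hneg
      have hup : u ^ p = u ^ (p - 1) * u := by
        rw [← Real.rpow_add_one (ne_of_gt hu0)]; ring_nf
      have h6 : (r - 1) * u ≤ lam * p * ‖w s‖ ^ 2 + u := by
        have hp2 : lam * p * ‖w s‖ ^ 2 = - (lam / 2 * (2 - r) * ‖w s‖ ^ 2) := by
          rw [hp]; ring
        have hns : 0 ≤ ‖w s‖ ^ 2 := sq_nonneg _
        rw [hu, hp2]
        nlinarith
      calc f' s = η₀ * (lam * p * u ^ (p - 1) * (⟪w s, v⟫ * ⟪w s, v⟫) + u ^ p * ‖v‖ ^ 2) := by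
              simp only [hf']; rw [hu]; ring
        _ ≥ η₀ * (lam * p * u ^ (p - 1) * (‖w s‖ ^ 2 * ‖v‖ ^ 2) + u ^ p * ‖v‖ ^ 2) :=
              mul_le_mul_of_nonneg_left (add_le_add_left h5 _) hη₀.le
        _ = η₀ * (u ^ (p - 1) * (lam * p * ‖w s‖ ^ 2 + u)) * ‖v‖ ^ 2 := by
              rw [hup]; ring
        _ ≥ η₀ * (u ^ (p - 1) * ((r - 1) * u)) * ‖v‖ ^ 2 := by
              refine mul_le_mul_of_nonneg_right ?_ (sq_nonneg ‖v‖)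
              exact mul_le_mul_of_nonneg_left
                (mul_le_mul_of_nonneg_left h6 hup1.le) hη₀.le
        _ = η₀ * (r - 1) * u ^ p * ‖v‖ ^ 2 := by rw [hup]; ring
    have hle : c * ‖v‖ ^ 2 ≤ η₀ * (r - 1) * u ^ p * ‖v‖ ^ 2 := by
      rw [hc]
      exact mul_le_mul_of_nonneg_right (mul_le_mul_of_nonneg_left hUu hηr) (sq_nonneg ‖v‖)
    linarith
  -- monotone argument: f 1 - f 0 ≥ c * ‖v‖^2
  set g : ℝ → ℝ := fun s => f s - c * ‖v‖ ^ 2 * s with hg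
  have hgderiv : ∀ s : ℝ, HasDerivAt g (f' s - c * ‖v‖ ^ 2) s := by
    intro s
    exact (hderiv s).sub (by simpa using (hasDerivAt_id s).const_mul (c * ‖v‖ ^ 2))
  have hmono : MonotoneOn g (Set.Icc (0:ℝ) 1) := by
    apply monotoneOn_of_deriv_nonneg (convex_Icc 0 1)
    · exact Continuous.continuousOn
        (Differentiable.continuous fun s => (hgderiv s).differentiableAt)
    · intro x hx
      exact ((hgderiv x).differentiableAt).differentiableWithinAt
    · intro x hx
      rw [interior_Icc] at hx
      rw [(hgderiv x).deriv]
      have := hbound x ⟨hx.1.le, hx.2.le⟩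
      linarith
  have h01 : g 0 ≤ g 1 := hmono (by norm_num) (by norm_num) zero_le_one
  have hf1 : f 1 = η₀ * ((1 + lam / 2 * ‖z‖ ^ 2) ^ p * ⟪z, v⟫) := by
    have hws : w 1 = z := by simp [hw, hv]
    simp only [hf, hws]
  have hf0 : f 0 = η₀ * ((1 + lam / 2 * ‖t‖ ^ 2) ^ p * ⟪t, v⟫) := by
    have hws : w 0 = t := by simp [hw]
    simp only [hf, hws]
  have hin : ⟪(η₀ * (1 + (lam / 2) * ‖z‖ ^ 2) ^ p) • z
      - (η₀ * (1 + (lam / 2) * ‖t‖ ^ 2) ^ p) • t, v⟫ = f 1 - f 0 := by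
    rw [inner_sub_left, real_inner_smul_left, real_inner_smul_left, hf1, hf0]; ring
  have hfin : f 1 - f 0 ≥ c * ‖v‖ ^ 2 := by
    simp only [hg] at h01
    linarith [h01]
  rw [hv] at hin
  rw [hin]
  rw [hv] at hfin
  calc f 1 - f 0 ≥ c * ‖z - t‖ ^ 2 := hfin
    _ = η₀ * (r - 1) * (1 + lam / 2 * (‖z‖ + ‖t‖) ^ 2) ^ p * ‖z - t‖ ^ 2 := by
        rw [hc, hU]

private lemma real_rpow_add_le (x y q : ℝ) (hx : 0 ≤ x) (hy : 0 ≤ y) (h0 : 0 ≤ q) (h1 : q ≤ 1) :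
    (x + y) ^ q ≤ x ^ q + y ^ q := by
  lift x to NNReal using hx
  lift y to NNReal using hy
  exact_mod_cast NNReal.rpow_add_le_add_rpow x y h0 h1

/-- Inequality (6.45)₂ of the paper: monotonicity of the Carreau nonlinearity
`g_r(z) = η₀ (1 + (λ/2)|z|²)^{(r−2)/2} z` for `1 < r < 2`. -/
theorem carreau_nonlinearity_monotone_r_lt_two
    (η₀ lam r : ℝ) (hη₀ : 0 < η₀) (hlam : 0 < lam) (hr1 : 1 < r) (hr2 : r < 2) :
    ∃ C : ℝ, 0 < C ∧
      ∀ z t : EuclideanSpace ℝ (Fin 2),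
        (⟪(η₀ * (1 + (lam / 2) * ‖z‖ ^ 2) ^ ((r - 2) / 2)) • z
            - (η₀ * (1 + (lam / 2) * ‖t‖ ^ 2) ^ ((r - 2) / 2)) • t, z - t⟫)
          ≥ C * ‖z - t‖ ^ 2 / (1 + ‖t‖ ^ (2 - r) + ‖z‖ ^ (2 - r)) := by
  set q : ℝ := (2 - r) / 2 with hq
  have hq0 : 0 < q := by rw [hq]; linarith
  have hq1 : q ≤ 1 := by rw [hq]; linarith
  set K : ℝ := max 1 ((lam / 2) ^ q) with hK
  have hK1 : (1:ℝ) ≤ K := le_max_left _ _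
  have hK2 : (lam / 2) ^ q ≤ K := le_max_right _ _
  have hK0 : (0:ℝ) < K := lt_of_lt_of_le one_pos hK1
  have hC0 : 0 < η₀ * (r - 1) / K := by
    have h : 0 < r - 1 := by linarith
    positivity
  refine ⟨η₀ * (r - 1) / K, hC0, ?_⟩
  intro z t
  have core := carreau_core η₀ lam r hη₀ hlam hr1 hr2 z t
  set a : ℝ := ‖z‖ with ha
  set b : ℝ := ‖t‖ with hb
  have ha0 : 0 ≤ a := norm_nonneg z
  have hb0 : 0 ≤ b := norm_nonneg t
  set D : ℝ := 1 + b ^ (2 - r) + a ^ (2 - r) with hD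
  have hD0 : 0 < D := by
    have h1 := Real.rpow_nonneg hb0 (2 - r)
    have h2 := Real.rpow_nonneg ha0 (2 - r)
    rw [hD]; linarith
  set U : ℝ := 1 + lam / 2 * (a + b) ^ 2 with hU
  have hU0 : 0 < U := by positivity
  -- U ^ q ≤ K * D
  have hUq : U ^ q ≤ K * D := by
    have h1 : U ^ q ≤ 1 ^ q + (lam / 2 * (a + b) ^ 2) ^ q := by
      rw [hU]
      exact real_rpow_add_le 1 (lam / 2 * (a + b) ^ 2) q one_pos.le (by positivity) hq0.le hq1
    have h2 : (lam / 2 * (a + b) ^ 2) ^ q = (lam / 2) ^ q * ((a + b) ^ 2) ^ q :=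
      Real.mul_rpow (by positivity) (by positivity)
    have h3 : ((a + b) ^ 2) ^ q = (a + b) ^ (2 - r) := by
      rw [← Real.rpow_natCast_mul (by positivity : (0:ℝ) ≤ a + b) 2 q]
      norm_num
      rw [hq]; ring_nf
    have h4 : (a + b) ^ (2 - r) ≤ a ^ (2 - r) + b ^ (2 - r) :=
      real_rpow_add_le a b (2 - r) ha0 hb0 (by linarith) (by linarith)
    have h5 : 0 ≤ a ^ (2 - r) + b ^ (2 - r) := by positivity
    have h6 : (lam / 2) ^ q * ((a + b) ^ 2) ^ q ≤ K * (a ^ (2 - r) + b ^ (2 - r)) := by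
      rw [h3]
      calc (lam / 2) ^ q * (a + b) ^ (2 - r)
          ≤ K * (a + b) ^ (2 - r) :=
            mul_le_mul_of_nonneg_right hK2 (Real.rpow_nonneg (by positivity) _)
        _ ≤ K * (a ^ (2 - r) + b ^ (2 - r)) := mul_le_mul_of_nonneg_left h4 hK0.le
    have h7 : (1:ℝ) ^ q = 1 := Real.one_rpow q
    rw [hD]
    calc U ^ q ≤ 1 ^ q + (lam / 2 * (a + b) ^ 2) ^ q := h1
      _ = 1 + (lam / 2) ^ q * ((a + b) ^ 2) ^ q := by rw [h7, h2]
      _ ≤ K * 1 + K * (a ^ (2 - r) + b ^ (2 - r)) := by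
          have := h6; linarith
      _ = K * (1 + b ^ (2 - r) + a ^ (2 - r)) := by ring
  -- hence η₀(r-1)/K / D ≤ η₀(r-1) U^((r-2)/2)
  have hUp : U ^ ((r - 2) / 2) = (U ^ q)⁻¹ := by
    rw [hq, ← Real.rpow_neg hU0.le]
    congr 1; ring
  have hinv : (K * D)⁻¹ ≤ U ^ ((r - 2) / 2) := by
    rw [hUp]
    exact inv_anti₀ (Real.rpow_pos_of_pos hU0 q) hUq
  have hKD : 0 < K * D := mul_pos hK0 hD0
  have hmain : η₀ * (r - 1) / K / D ≤ η₀ * (r - 1) * U ^ ((r - 2) / 2) := by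
    have h8 : η₀ * (r - 1) / K / D = η₀ * (r - 1) * (K * D)⁻¹ := by
      field_simp
    rw [h8]
    exact mul_le_mul_of_nonneg_left hinv (by nlinarith)
  have hd2 : (0:ℝ) ≤ ‖z - t‖ ^ 2 := sq_nonneg _
  have hfinal : η₀ * (r - 1) / K * ‖z - t‖ ^ 2 / D
      ≤ η₀ * (r - 1) * U ^ ((r - 2) / 2) * ‖z - t‖ ^ 2 := by
    have h9 : η₀ * (r - 1) / K * ‖z - t‖ ^ 2 / D = (η₀ * (r - 1) / K / D) * ‖z - t‖ ^ 2 := by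
      ring
    rw [h9]
    exact mul_le_mul_of_nonneg_right hmain hd2
  calc ⟪(η₀ * (1 + (lam / 2) * ‖z‖ ^ 2) ^ ((r - 2) / 2)) • z
          - (η₀ * (1 + (lam / 2) * ‖t‖ ^ 2) ^ ((r - 2) / 2)) • t, z - t⟫
      ≥ η₀ * (r - 1) * (1 + lam / 2 * (‖z‖ + ‖t‖) ^ 2) ^ ((r - 2) / 2) * ‖z - t‖ ^ 2 := core
    _ ≥ η₀ * (r - 1) / K * ‖z - t‖ ^ 2 / D := by rw [← ha, ← hb, ← hU]; exact hfinal
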